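/- Let r be an odd prime, let k be a multiple of r with k ≥ 2r, and suppose χ : {1,…,kr−r} → ℤ/rℤ is a coloring that admits no r-zero-sum solution to the equation E. Then for every integer α with 2 ≤ α ≤ r − 1, 2·χ(α) = χ(α−1) + χ(α+1) in ℤ/rℤ. -/

import Mathlib

/-- `hasZeroSumSolution k r N χ` says the coloring `χ` of `{1,…,N}` by `ZMod r`
admits an `r`-zero-sum solution to `x₁ + ⋯ + x_{k-1} = x_k`. -/
def hasZeroSumSolution (k r N : ℕ) (χ : ℕ → ZMod r) : Prop :=
  ∃ (x : Fin (k - 1) → ℕ) (y : ℕ),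
    (∀ i, 1 ≤ x i ∧ x i ≤ N) ∧ (1 ≤ y ∧ y ≤ N) ∧
    (∑ i, x i) = y ∧
    (∑ i, χ (x i)) + χ y = 0

theorem no_solution_implies_recurrence (r k : ℕ) (hrp : r.Prime) (hodd : Odd r)
    (hdvd : r ∣ k) (hk : 2 * r ≤ k) (χ : ℕ → ZMod r)
    (hno : ¬ hasZeroSumSolution k r (k * r - r) χ)
    (α : ℕ) (h2 : 2 ≤ α) (hα : α ≤ r - 1) :
    2 * χ α = χ (α - 1) + χ (α + 1) := by
  by_contra hne
  haveI : Fact r.Prime := ⟨hrp⟩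
  have hr3 : 3 ≤ r := by
    have h2r := hrp.two_le
    have : r ≠ 2 := by rintro rfl; rw [Nat.odd_iff] at hodd; omega
    omega
  -- basic quantities
  set a := χ (α - 1) with ha
  set b := χ (α + 1) with hb
  set c := χ α with hc
  set e := χ 1 with he
  set m := k - 1 - 2 * (r - 1) with hm
  set y := 2 * ((r - 1) * α) + m with hy
  set d : ZMod r := a + b - 2 * c with hd
  have hdne : d ≠ 0 := by
    rw [hd, sub_ne_zero]
    exact fun h => hne h.symm
  set f : ZMod r := ((2 * (r - 1) : ℕ) : ZMod r) * c + (m : ZMod r) * e + χ y with hf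
  set jz : ZMod r := -f * d⁻¹ with hjz
  set j := jz.val with hjval
  have hjlt : j < r := ZMod.val_lt jz
  have hjle : j ≤ r - 1 := by omega
  have h2jle : 2 * j ≤ 2 * (r - 1) := by omega
  -- the list of values
  set L : List ℕ := List.replicate j (α - 1) ++ List.replicate j (α + 1) ++
      List.replicate (2 * (r - 1) - 2 * j) α ++ List.replicate m 1 with hL
  have hlen : k - 1 = L.length := by
    simp [hL, List.length_append, List.length_replicate]
    omega
  set x : Fin (k - 1) → ℕ := fun i => L.get (finCongr hlen i) with hx
  -- all entries of L are between 1 and N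
  have hN1 : r ≤ k * r - r := by
    have h1 : 2 * r * r ≤ k * r := Nat.mul_le_mul_right r hk
    have h2 : 2 * r ≤ 2 * r * r := Nat.le_mul_of_pos_right _ (by omega)
    exact Nat.le_sub_of_add_le (by linarith)
  have hmemL : ∀ z ∈ L, 1 ≤ z ∧ z ≤ k * r - r := by
    intro z hz
    have hbound : z = α - 1 ∨ z = α + 1 ∨ z = α ∨ z = 1 := by
      simp only [hL, List.mem_append, List.mem_replicate] at hz
      tauto
    have hα1 : α + 1 ≤ r := by omega
    rcases hbound with h | h | h | h <;> omega
  -- sum of the list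
  have hsumL : L.sum = y := by
    have e1 : j * (α - 1) + j * (α + 1) = 2 * (j * α) := by
      rw [← Nat.mul_add]
      have : α - 1 + (α + 1) = 2 * α := by omega
      rw [this]; ring
    have e2 : (2 * (r - 1) - 2 * j) * α = 2 * ((r - 1) * α) - 2 * (j * α) := by
      rw [Nat.sub_mul]; ring_nf
    have e3 : j * α ≤ (r - 1) * α := Nat.mul_le_mul_right _ hjle
    simp only [hL, List.sum_append, List.sum_replicate, smul_eq_mul, mul_one]
    rw [e2]
    omega
  apply hno
  refine ⟨x, y, ?_, ?_, ?_, ?_⟩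
  · intro i
    exact hmemL _ (List.get_mem L _)
  · constructor
    · omega
    · -- y ≤ k * r - r
      have key : ∀ r1 m' : ℕ, α ≤ r1 →
          2 * (r1 * α) + m' + (r1 + 1) ≤ (m' + 1 + 2 * r1) * (r1 + 1) := by
        intro r1 m' h
        nlinarith
      have e1 : m + 1 + 2 * (r - 1) = k := by omega
      have e2 : r - 1 + 1 = r := by omega
      apply Nat.le_sub_of_add_le
      calc 2 * ((r - 1) * α) + m + r = 2 * ((r - 1) * α) + m + ((r - 1) + 1) := by omega
        _ ≤ (m + 1 + 2 * (r - 1)) * ((r - 1) + 1) := key (r - 1) m hα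
        _ = k * r := by rw [e1, e2]
  · -- sum of x equals y
    have : ∑ i, x i = L.sum := by
      rw [hx]
      rw [Fintype.sum_equiv (finCongr hlen) _ (fun i => L.get i) (fun i => rfl)]
      simpa using Fin.sum_univ_get L
    rw [this, hsumL]
  · -- zero-sum condition
    have hcolsum : ∑ i, χ (x i) = j • a + j • b + (2 * (r - 1) - 2 * j) • c + m • e := by
      have : ∑ i, χ (x i) = (L.map χ).sum := by
        rw [hx]
        rw [Fintype.sum_equiv (finCongr hlen) _ (fun i => χ (L.get i)) (fun i => rfl)]
        simpa using Fin.prod_univ_get' L χ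
      rw [this]
      simp only [hL, List.map_append, List.map_replicate, List.sum_append,
        List.sum_replicate, ha, hb, hc, he]
    rw [hcolsum]
    have hjcast : ((j : ℕ) : ZMod r) = jz := ZMod.natCast_rightInverse jz
    have hcast2 : ((2 * (r - 1) - 2 * j : ℕ) : ZMod r) =
        ((2 * (r - 1) : ℕ) : ZMod r) - 2 * jz := by
      rw [Nat.cast_sub h2jle]
      push_cast [hjcast]
      ring
    simp only [nsmul_eq_mul, hjcast, hcast2]
    rw [hjz, hd]
    have hfe : -f * (a + b - 2 * c)⁻¹ * (a + b - 2 * c) = -f := by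
      rw [mul_assoc, inv_mul_cancel₀ (by rw [← hd]; exact hdne), mul_one]
    have expand : (-f * (a + b - 2 * c)⁻¹) * a + (-f * (a + b - 2 * c)⁻¹) * b +
        (((2 * (r - 1) : ℕ) : ZMod r) - 2 * (-f * (a + b - 2 * c)⁻¹)) * c +
        (m : ZMod r) * e + χ y =
        (-f * (a + b - 2 * c)⁻¹) * (a + b - 2 * c) + f := by
      rw [hf]; ring
    rw [expand, hfe]
    ring
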